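/- Let C be a well-powered category with wide pullbacks and let F : C ⥤ C preserve monomorphisms and intersections. Then for every morphism f : X ⟶ F.obj Y, the previous-time operator ⬗_f : Subobject X → Subobject Y is left adjoint to the next-time operator ○_f : Subobject Y → Subobject X, i.e., they form a Galois connection: ⬗_f m ≤ n if and only if m ≤ ○_f n, for all subobjects m of X and n of Y. Consequently ⬗_f preserves arbitrary suprema of subobjects. -/

import Mathlib

open CategoryTheory CategoryTheory.Limits

universe w v u

variable {C : Type u} [Category.{v} C]

/-- A functor preserves monomorphisms. -/
def PreservesMonos (F : C ⥤ C) : Prop :=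
  ∀ ⦃X Y : C⦄ (f : X ⟶ Y), Mono f → Mono (F.map f)

/-- The induced map on subobject lattices of a mono-preserving functor. -/
noncomputable def subMap {F : C ⥤ C} (hF : PreservesMonos F) {Y : C} (m : Subobject Y) :
    Subobject (F.obj Y) :=
  letI : Mono (F.map m.arrow) := hF m.arrow inferInstance
  Subobject.mk (F.map m.arrow)

/-- A mono-preserving functor preserves intersections if the induced maps on subobject
lattices preserve arbitrary infima. -/
def PreservesIntersections [WellPowered.{v} C] [HasWidePullbacks.{v} C] {F : C ⥤ C}
    (hF : PreservesMonos F) : Prop :=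
  ∀ ⦃Y : C⦄ (s : Set (Subobject Y)), subMap hF (sInf s) = sInf (subMap hF '' s)

/-- The "next time" operator of a morphism `f : X ⟶ F.obj Y`. -/
noncomputable def nextTime [HasPullbacks C] {F : C ⥤ C} (hF : PreservesMonos F)
    {X Y : C} (f : X ⟶ F.obj Y) (n : Subobject Y) : Subobject X :=
  (Subobject.pullback f).obj (subMap hF n)

/-- The "previous time" operator of a morphism `f : X ⟶ F.obj Y`: it sends a subobject `m` of
`X` to the least subobject `n` of `Y` such that `m.arrow ≫ f` factors through `F.map n.arrow`. -/
noncomputable def prevTime [WellPowered.{v} C] [HasWidePullbacks.{v} C] (F : C ⥤ C)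
    {X Y : C} (f : X ⟶ F.obj Y) (m : Subobject X) : Subobject Y :=
  sInf {n : Subobject Y | ∃ g : (m : C) ⟶ F.obj (n : C), g ≫ F.map n.arrow = m.arrow ≫ f}

/-- An `I`-pointed coalgebra `(X, c, i)` is reachable if every monomorphic homomorphism of
`I`-pointed coalgebras into it is an isomorphism. -/
def Reachable (F : C ⥤ C) {I X : C} (c : X ⟶ F.obj X) (i : I ⟶ X) : Prop :=
  ∀ ⦃S : C⦄ (s : S ⟶ F.obj S) (iS : I ⟶ S) (m : S ⟶ X),
    Mono m → s ≫ F.map m = m ≫ c → iS ≫ m = i → IsIso m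

section Helpers

/-- `m ≤ pullback f (mk p)` iff `m.arrow ≫ f` factors through `p`. -/
theorem le_pullback_mk_iff [HasPullbacks C] {X Y Z : C} (f : X ⟶ Y) (p : Z ⟶ Y) [Mono p]
    (m : Subobject X) :
    m ≤ (Subobject.pullback f).obj (Subobject.mk p) ↔
      ∃ g : (m : C) ⟶ Z, g ≫ p = m.arrow ≫ f := by
  have heq : (Subobject.pullback f).obj (Subobject.mk p) =
      Subobject.mk (pullback.snd p f) := rfl
  rw [heq]
  constructor
  · intro h
    refine ⟨(Subobject.ofLE _ _ h ≫ (Subobject.underlyingIso _).hom) ≫ pullback.fst p f, ?_⟩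
    simp only [Category.assoc, pullback.condition]
    slice_lhs 2 3 => rw [Subobject.underlyingIso_hom_comp_eq_mk]
    rw [← Category.assoc, Subobject.ofLE_arrow]
  · rintro ⟨g, hg⟩
    exact Subobject.le_mk_of_comm (pullback.lift g m.arrow hg) (pullback.lift_snd _ _ _)

/-- If a morphism factors through every member of a set of subobjects, it factors through
their infimum. -/
theorem sInf_factors [WellPowered.{v} C] [HasWidePullbacks.{v} C] {A Y : C}
    (s : Set (Subobject Y)) (h : A ⟶ Y) (hs : ∀ P ∈ s, P.Factors h) :
    (sInf s).Factors h := by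
  haveI : LocallySmall.{v} C := inferInstance
  show (Subobject.sInf s).Factors h
  rw [Subobject.sInf, Subobject.mk_factors_iff]
  -- build a cone over the wide cospan with apex `A`
  let c : Cone (Subobject.wideCospan s) :=
    WidePullbackShape.mkCone h
      (fun j => by
        refine Subobject.factorThru _ h (hs _ ?_)
        rcases j with ⟨-, ⟨g, ⟨mem, rfl⟩⟩⟩
        simpa using mem)
      (fun j => by simp [Subobject.wideCospan]; exact Subobject.factorThru_arrow _ _ _)
  exact ⟨Limits.limit.lift _ c, Limits.limit.lift_π c none⟩

end Helpers

/-- For an intersection-preserving functor, the "previous time" operator `⬗_f` is left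
adjoint to the "next time" operator `○_f` (they form a Galois connection); consequently
`⬗_f` preserves arbitrary suprema of subobjects. -/
theorem prevTime_galoisConnection_nextTime
    [WellPowered.{v} C] [HasWidePullbacks.{v} C]
    (F : C ⥤ C) (hF : PreservesMonos F) (hInt : PreservesIntersections hF)
    {X Y : C} (f : X ⟶ F.obj Y) :
    GaloisConnection (prevTime F f) (nextTime hF f) ∧
      ∀ (s : Set (Subobject X)) (m : Subobject X),
        IsLUB s m → IsLUB (prevTime F f '' s) (prevTime F f m) := by
  -- the characterization of `≤ nextTime`
  haveI : LocallySmall.{v} C := inferInstance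
  have key : ∀ (m : Subobject X) (n : Subobject Y),
      m ≤ nextTime hF f n ↔ ∃ g : (m : C) ⟶ F.obj (n : C),
        g ≫ F.map n.arrow = m.arrow ≫ f := by
    intro m n
    letI : Mono (F.map n.arrow) := hF n.arrow inferInstance
    exact le_pullback_mk_iff f (F.map n.arrow) m
  have gc : GaloisConnection (prevTime F f) (nextTime hF f) := by
    intro m n
    constructor
    · intro h
      -- first show `m ≤ nextTime (prevTime m)`
      set S : Set (Subobject Y) :=
        {n : Subobject Y | ∃ g : (m : C) ⟶ F.obj (n : C), g ≫ F.map n.arrow = m.arrow ≫ f}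
        with hS
      have hfac : (subMap hF (sInf S)).Factors (m.arrow ≫ f) := by
        rw [hInt S]
        refine sInf_factors _ _ ?_
        rintro P ⟨Q, hQ, rfl⟩
        obtain ⟨g, hg⟩ := hQ
        letI : Mono (F.map Q.arrow) := hF Q.arrow inferInstance
        show (Subobject.mk (F.map Q.arrow)).Factors (m.arrow ≫ f)
        rw [Subobject.mk_factors_iff]
        exact ⟨g, hg⟩
      have hm : m ≤ nextTime hF f (sInf S) := by
        rw [key]
        letI : Mono (F.map (sInf S).arrow) := hF (sInf S).arrow inferInstance
        rw [show subMap hF (sInf S) = Subobject.mk (F.map (sInf S).arrow) from rfl,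
          Subobject.mk_factors_iff] at hfac
        exact hfac
      refine hm.trans ?_
      -- monotonicity of nextTime
      have hsub : subMap hF (sInf S) ≤ subMap hF n := by
        letI : Mono (F.map (sInf S).arrow) := hF (sInf S).arrow inferInstance
        letI : Mono (F.map n.arrow) := hF n.arrow inferInstance
        refine Subobject.mk_le_mk_of_comm (F.map (Subobject.ofLE _ _ (show sInf S ≤ n from h))) ?_
        rw [← F.map_comp, Subobject.ofLE_arrow]
      exact (Subobject.pullback f).monotone hsub
    · intro h
      -- `n` belongs to the defining set of `prevTime m`
      obtain ⟨g, hg⟩ := (key m n).mp h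
      exact sInf_le (α := Subobject Y) ⟨g, hg⟩
  exact ⟨gc, fun s m hm => gc.isLUB_l_image hm⟩
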